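/- For each odd n ≥ 1, write δ = (n−1)/2 and let N⁺(0), N⁻(0) be the out-set and in-set of vertex 0 in RLT_n. The number of ordered pairs (γ₁, γ₂), where γ₁ is a 3-cycle through 0, γ₂ is a 5-cycle through 0, and the (unique) vertex of γ₁ lying in N⁺(0) also lies on γ₂, equals (δ−1)δ(δ+1)(22δ²−15δ−18)/40. -/

import Mathlib

/-- The dominance relation of the regular locally transitive tournament `RLT_n`
on `ZMod n` (for odd `n`). -/
def rltAdj (n : ℕ) (i j : ZMod n) : Prop :=
  (j - i).val ∈ Finset.Icc 1 ((n - 1) / 2)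

/-- An `m`-cycle through the vertex `0`, recorded as the injective cyclic sequence of
its vertices based at `0` (so each such cycle is recorded exactly once). -/
def IsBasedCycleAtZero (n m : ℕ) [NeZero m] (v : Fin m → ZMod n) : Prop :=
  v 0 = 0 ∧ Function.Injective v ∧ ∀ k, rltAdj n (v k) (v (k + 1))


def stepN (δ p q : ℕ) : Prop := (p < q ∧ q ≤ p + δ) ∨ (q + δ + 1 ≤ p)

instance (δ p q : ℕ) : Decidable (stepN δ p q) := by unfold stepN; exact inferInstance

lemma val_sub' {n : ℕ} [NeZero n] (x y : ZMod n) :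
    (y - x).val = (y.val + (n - x.val)) % n := by
  by_cases hx : x = 0
  · subst hx
    rw [sub_zero, ZMod.val_zero, Nat.sub_zero, Nat.add_mod_right,
      Nat.mod_eq_of_lt (ZMod.val_lt y)]
  · rw [sub_eq_add_neg, ZMod.val_add, ZMod.neg_val, if_neg hx]

lemma adj_iff {δ : ℕ} (x y : ZMod (2*δ+1)) :
    rltAdj (2*δ+1) x y ↔ stepN δ x.val y.val := by
  have hx := ZMod.val_lt x
  have hy := ZMod.val_lt y
  rw [rltAdj, Finset.mem_Icc, val_sub']
  have h2 : (2*δ+1-1)/2 = δ := by omega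
  rw [h2]
  rcases le_or_gt x.val y.val with h | h
  · have h3 : y.val + (2*δ+1 - x.val) = (y.val - x.val) + (2*δ+1) := by omega
    rw [h3, Nat.add_mod_right, Nat.mod_eq_of_lt (by omega)]
    unfold stepN; omega
  · rw [Nat.mod_eq_of_lt (by omega)]
    unfold stepN; omega

lemma adj_ne {δ : ℕ} {x y : ZMod (2*δ+1)} (h : rltAdj (2*δ+1) x y) : x ≠ y := by
  rw [adj_iff] at h
  intro hxy
  rw [hxy] at h
  unfold stepN at h; omega

lemma adj_ne2 {δ : ℕ} {x y z : ZMod (2*δ+1)} (h1 : rltAdj (2*δ+1) x y)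
    (h2 : rltAdj (2*δ+1) y z) : x ≠ z := by
  rw [adj_iff] at h1 h2
  intro hxz
  rw [hxz] at h1
  unfold stepN at h1 h2; omega

lemma based3_iff {δ : ℕ} (v : Fin 3 → ZMod (2*δ+1)) :
    IsBasedCycleAtZero (2*δ+1) 3 v ↔
      (v 0 = 0 ∧ rltAdj (2*δ+1) (v 0) (v 1) ∧ rltAdj (2*δ+1) (v 1) (v 2) ∧
        rltAdj (2*δ+1) (v 2) (v 0)) := by
  constructor
  · rintro ⟨h0, _, hadj⟩
    refine ⟨h0, hadj 0, hadj 1, ?_⟩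
    have := hadj 2
    rwa [show (2:Fin 3)+1 = 0 by decide] at this
  · rintro ⟨h0, h1, h2, h3⟩
    have n01 : v 0 ≠ v 1 := adj_ne h1
    have n12 : v 1 ≠ v 2 := adj_ne h2
    have n20 : v 2 ≠ v 0 := adj_ne h3
    refine ⟨h0, ?_, ?_⟩
    · intro i j hij
      fin_cases i <;> fin_cases j <;>
        first
          | rfl
          | (exact absurd hij n01) | (exact absurd hij n12) | (exact absurd hij n20)
          | (exact absurd hij.symm n01) | (exact absurd hij.symm n12)
          | (exact absurd hij.symm n20)
    · intro k
      fin_cases k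
      · exact h1
      · exact h2
      · simpa using h3

lemma based5_iff {δ : ℕ} (v : Fin 5 → ZMod (2*δ+1)) :
    IsBasedCycleAtZero (2*δ+1) 5 v ↔
      (v 0 = 0 ∧ rltAdj (2*δ+1) (v 0) (v 1) ∧ rltAdj (2*δ+1) (v 1) (v 2) ∧
        rltAdj (2*δ+1) (v 2) (v 3) ∧ rltAdj (2*δ+1) (v 3) (v 4) ∧
        rltAdj (2*δ+1) (v 4) (v 0)) := by
  constructor
  · rintro ⟨h0, _, hadj⟩
    refine ⟨h0, hadj 0, hadj 1, hadj 2, hadj 3, ?_⟩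
    have := hadj 4
    rwa [show (4:Fin 5)+1 = 0 by decide] at this
  · rintro ⟨h0, h1, h2, h3, h4, h5⟩
    have n01 : v 0 ≠ v 1 := adj_ne h1
    have n12 : v 1 ≠ v 2 := adj_ne h2
    have n23 : v 2 ≠ v 3 := adj_ne h3
    have n34 : v 3 ≠ v 4 := adj_ne h4
    have n40 : v 4 ≠ v 0 := adj_ne h5
    have n02 : v 0 ≠ v 2 := adj_ne2 h1 h2
    have n13 : v 1 ≠ v 3 := adj_ne2 h2 h3
    have n24 : v 2 ≠ v 4 := adj_ne2 h3 h4
    have n30 : v 3 ≠ v 0 := adj_ne2 h4 h5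
    have n41 : v 4 ≠ v 1 := adj_ne2 h5 h1
    refine ⟨h0, ?_, ?_⟩
    · intro i j hij
      fin_cases i <;> fin_cases j <;>
        first
          | rfl
          | (exact absurd hij n01) | (exact absurd hij n12) | (exact absurd hij n23)
          | (exact absurd hij n34) | (exact absurd hij n40) | (exact absurd hij n02)
          | (exact absurd hij n13) | (exact absurd hij n24) | (exact absurd hij n30)
          | (exact absurd hij n41)
          | (exact absurd hij.symm n01) | (exact absurd hij.symm n12)
          | (exact absurd hij.symm n23) | (exact absurd hij.symm n34)
          | (exact absurd hij.symm n40) | (exact absurd hij.symm n02)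
          | (exact absurd hij.symm n13) | (exact absurd hij.symm n24)
          | (exact absurd hij.symm n30) | (exact absurd hij.symm n41)
    · intro k
      fin_cases k
      · exact h1
      · exact h2
      · exact h3
      · exact h4
      · simpa using h5


lemma LI1 (p q : ℕ) : ∀ e : ℕ, q ≤ e → (120:ℤ) * (∑ x ∈ Finset.Icc (q+1) e, (((p:ℤ)+(q:ℤ)+(x:ℤ))*(x:ℤ))) = (20)*(e:ℤ) + (60)*(e:ℤ)*(e:ℤ) + (40)*(e:ℤ)*(e:ℤ)*(e:ℤ) + (-20)*(q:ℤ) + (60)*(q:ℤ)*(e:ℤ) + (60)*(q:ℤ)*(e:ℤ)*(e:ℤ) + (-120)*(q:ℤ)*(q:ℤ) + (-100)*(q:ℤ)*(q:ℤ)*(q:ℤ) + (60)*(p:ℤ)*(e:ℤ) + (60)*(p:ℤ)*(e:ℤ)*(e:ℤ) + (-60)*(p:ℤ)*(q:ℤ) + (-60)*(p:ℤ)*(q:ℤ)*(q:ℤ) := by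
  intro e he
  induction e, he using Nat.le_induction with
  | base => rw [Finset.Icc_eq_empty (by omega), Finset.sum_empty, mul_zero]; push_cast; try ring
  | succ e he ih =>
    rw [Finset.sum_Icc_succ_top (by omega), mul_add, ih]; push_cast; try ring

lemma LI2 (p d : ℕ) : ∀ e : ℕ, p ≤ e → (120:ℤ) * (∑ x ∈ Finset.Icc (p+1) e, ((-20)*(x:ℤ) + (-120)*(x:ℤ)*(x:ℤ) + (-100)*(x:ℤ)*(x:ℤ)*(x:ℤ) + (20)*(d:ℤ) + (60)*(d:ℤ)*(x:ℤ) + (60)*(d:ℤ)*(d:ℤ) + (60)*(d:ℤ)*(d:ℤ)*(x:ℤ) + (40)*(d:ℤ)*(d:ℤ)*(d:ℤ) + (-60)*(p:ℤ)*(x:ℤ) + (-60)*(p:ℤ)*(x:ℤ)*(x:ℤ) + (60)*(p:ℤ)*(d:ℤ) + (60)*(p:ℤ)*(d:ℤ)*(d:ℤ))) = (-3600)*(e:ℤ) + (-11400)*(e:ℤ)*(e:ℤ) + (-10800)*(e:ℤ)*(e:ℤ)*(e:ℤ) + (-3000)*(e:ℤ)*(e:ℤ)*(e:ℤ)*(e:ℤ)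 + (6000)*(d:ℤ)*(e:ℤ) + (3600)*(d:ℤ)*(e:ℤ)*(e:ℤ) + (10800)*(d:ℤ)*(d:ℤ)*(e:ℤ) + (3600)*(d:ℤ)*(d:ℤ)*(e:ℤ)*(e:ℤ) + (4800)*(d:ℤ)*(d:ℤ)*(d:ℤ)*(e:ℤ) + (3600)*(p:ℤ) + (-4800)*(p:ℤ)*(e:ℤ) + (-7200)*(p:ℤ)*(e:ℤ)*(e:ℤ) + (-2400)*(p:ℤ)*(e:ℤ)*(e:ℤ)*(e:ℤ) + (-6000)*(p:ℤ)*(d:ℤ) + (7200)*(p:ℤ)*(d:ℤ)*(e:ℤ) + (-10800)*(p:ℤ)*(d:ℤ)*(d:ℤ) + (7200)*(p:ℤ)*(d:ℤ)*(d:ℤ)*(e:ℤ) + (-4800)*(p:ℤ)*(d:ℤ)*(d:ℤ)*(d:ℤ) + (16200)*(p:ℤ)*(p:ℤ) + (-10800)*(p:ℤ)*(p:ℤ)*(d:ℤ) + (-10800)*(p:ℤ)*(p:ℤ)*(d:ℤ)*(d:ℤ) + (18000)*(p:ℤ)*(p:ℤ)*(p:ℤ) + (5400)*(p:ℤ)*(p:ℤ)*(p:ℤ)*(p:ℤ)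 := by
  intro e he
  induction e, he using Nat.le_induction with
  | base => rw [Finset.Icc_eq_empty (by omega), Finset.sum_empty, mul_zero]; push_cast; try ring
  | succ e he ih =>
    rw [Finset.sum_Icc_succ_top (by omega), mul_add, ih]; push_cast; try ring

lemma LI3 (d : ℕ) : ∀ e : ℕ, (120:ℤ) * (∑ x ∈ Finset.Icc 1 e, ((3600)*(x:ℤ) + (16200)*(x:ℤ)*(x:ℤ) + (18000)*(x:ℤ)*(x:ℤ)*(x:ℤ) + (5400)*(x:ℤ)*(x:ℤ)*(x:ℤ)*(x:ℤ) + (-3600)*(d:ℤ) + (-10800)*(d:ℤ)*(x:ℤ) + (-10800)*(d:ℤ)*(x:ℤ)*(x:ℤ) + (-5400)*(d:ℤ)*(d:ℤ) + (-10800)*(d:ℤ)*(d:ℤ)*(x:ℤ) + (-10800)*(d:ℤ)*(d:ℤ)*(x:ℤ)*(x:ℤ) + (3600)*(d:ℤ)*(d:ℤ)*(d:ℤ) + (5400)*(d:ℤ)*(d:ℤ)*(d:ℤ)*(d:ℤ))) = (518400)*(e:ℤ) + (1728000)*(e:ℤ)*(e:ℤ) + (1944000)*(e:ℤ)*(e:ℤ)*(e:ℤ)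 + (864000)*(e:ℤ)*(e:ℤ)*(e:ℤ)*(e:ℤ) + (129600)*(e:ℤ)*(e:ℤ)*(e:ℤ)*(e:ℤ)*(e:ℤ) + (-1296000)*(d:ℤ)*(e:ℤ) + (-1296000)*(d:ℤ)*(e:ℤ)*(e:ℤ) + (-432000)*(d:ℤ)*(e:ℤ)*(e:ℤ)*(e:ℤ) + (-1512000)*(d:ℤ)*(d:ℤ)*(e:ℤ) + (-1296000)*(d:ℤ)*(d:ℤ)*(e:ℤ)*(e:ℤ) + (-432000)*(d:ℤ)*(d:ℤ)*(e:ℤ)*(e:ℤ)*(e:ℤ) + (432000)*(d:ℤ)*(d:ℤ)*(d:ℤ)*(e:ℤ) + (648000)*(d:ℤ)*(d:ℤ)*(d:ℤ)*(d:ℤ)*(e:ℤ) := by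
  intro e
  induction e with
  | zero => rw [Finset.Icc_eq_empty (by omega), Finset.sum_empty, mul_zero]; push_cast; try ring
  | succ e ih =>
    rw [Finset.sum_Icc_succ_top (by omega), mul_add, ih]; push_cast; try ring

lemma LII1 (p q d : ℕ) : ∀ e : ℕ, d ≤ e → (120:ℤ) * (∑ x ∈ Finset.Icc (d+1) e, (((p:ℤ)+(q:ℤ))*(2*(d:ℤ)-(x:ℤ)))) = (-60)*(q:ℤ)*(e:ℤ) + (-60)*(q:ℤ)*(e:ℤ)*(e:ℤ) + (60)*(q:ℤ)*(d:ℤ) + (240)*(q:ℤ)*(d:ℤ)*(e:ℤ) + (-180)*(q:ℤ)*(d:ℤ)*(d:ℤ) + (-60)*(p:ℤ)*(e:ℤ) + (-60)*(p:ℤ)*(e:ℤ)*(e:ℤ) + (60)*(p:ℤ)*(d:ℤ) + (240)*(p:ℤ)*(d:ℤ)*(e:ℤ) + (-180)*(p:ℤ)*(d:ℤ)*(d:ℤ) := by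
  intro e he
  induction e, he using Nat.le_induction with
  | base => rw [Finset.Icc_eq_empty (by omega), Finset.sum_empty, mul_zero]; push_cast; try ring
  | succ e he ih =>
    rw [Finset.sum_Icc_succ_top (by omega), mul_add, ih]; push_cast; try ring

lemma LII2 (p d : ℕ) : ∀ e : ℕ, p ≤ e → (120:ℤ) * (∑ x ∈ Finset.Icc (p+1) e, ((-60)*(x:ℤ)*(x:ℤ) + (-60)*(x:ℤ)*(x:ℤ)*(x:ℤ) + (120)*(d:ℤ)*(x:ℤ)*(x:ℤ) + (-60)*(p:ℤ)*(x:ℤ) + (-60)*(p:ℤ)*(x:ℤ)*(x:ℤ) + (120)*(p:ℤ)*(d:ℤ)*(x:ℤ))) = (-1200)*(e:ℤ) + (-5400)*(e:ℤ)*(e:ℤ) + (-6000)*(e:ℤ)*(e:ℤ)*(e:ℤ) + (-1800)*(e:ℤ)*(e:ℤ)*(e:ℤ)*(e:ℤ) + (2400)*(d:ℤ)*(e:ℤ) + (7200)*(d:ℤ)*(e:ℤ)*(e:ℤ) + (4800)*(d:ℤ)*(e:ℤ)*(e:ℤ)*(e:ℤ) + (1200)*(p:ℤ) + (-4800)*(p:ℤ)*(e:ℤ)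 + (-7200)*(p:ℤ)*(e:ℤ)*(e:ℤ) + (-2400)*(p:ℤ)*(e:ℤ)*(e:ℤ)*(e:ℤ) + (-2400)*(p:ℤ)*(d:ℤ) + (7200)*(p:ℤ)*(d:ℤ)*(e:ℤ) + (7200)*(p:ℤ)*(d:ℤ)*(e:ℤ)*(e:ℤ) + (10200)*(p:ℤ)*(p:ℤ) + (-14400)*(p:ℤ)*(p:ℤ)*(d:ℤ) + (13200)*(p:ℤ)*(p:ℤ)*(p:ℤ) + (-12000)*(p:ℤ)*(p:ℤ)*(p:ℤ)*(d:ℤ) + (4200)*(p:ℤ)*(p:ℤ)*(p:ℤ)*(p:ℤ) := by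
  intro e he
  induction e, he using Nat.le_induction with
  | base => rw [Finset.Icc_eq_empty (by omega), Finset.sum_empty, mul_zero]; push_cast; try ring
  | succ e he ih =>
    rw [Finset.sum_Icc_succ_top (by omega), mul_add, ih]; push_cast; try ring

lemma LII3 (d : ℕ) : ∀ e : ℕ, (120:ℤ) * (∑ x ∈ Finset.Icc 1 e, ((1200)*(x:ℤ) + (10200)*(x:ℤ)*(x:ℤ) + (13200)*(x:ℤ)*(x:ℤ)*(x:ℤ) + (4200)*(x:ℤ)*(x:ℤ)*(x:ℤ)*(x:ℤ) + (-1200)*(d:ℤ) + (-7200)*(d:ℤ)*(x:ℤ) + (-14400)*(d:ℤ)*(x:ℤ)*(x:ℤ) + (-12000)*(d:ℤ)*(x:ℤ)*(x:ℤ)*(x:ℤ) + (-3000)*(d:ℤ)*(d:ℤ) + (1200)*(d:ℤ)*(d:ℤ)*(d:ℤ) + (4800)*(d:ℤ)*(d:ℤ)*(d:ℤ)*(x:ℤ) + (3000)*(d:ℤ)*(d:ℤ)*(d:ℤ)*(d:ℤ))) = (259200)*(e:ℤ) + (1080000)*(e:ℤ)*(e:ℤ) + (1368000)*(e:ℤ)*(e:ℤ)*(e:ℤ)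 + (648000)*(e:ℤ)*(e:ℤ)*(e:ℤ)*(e:ℤ) + (100800)*(e:ℤ)*(e:ℤ)*(e:ℤ)*(e:ℤ)*(e:ℤ) + (-864000)*(d:ℤ)*(e:ℤ) + (-1656000)*(d:ℤ)*(e:ℤ)*(e:ℤ) + (-1296000)*(d:ℤ)*(e:ℤ)*(e:ℤ)*(e:ℤ) + (-360000)*(d:ℤ)*(e:ℤ)*(e:ℤ)*(e:ℤ)*(e:ℤ) + (-360000)*(d:ℤ)*(d:ℤ)*(e:ℤ) + (432000)*(d:ℤ)*(d:ℤ)*(d:ℤ)*(e:ℤ) + (288000)*(d:ℤ)*(d:ℤ)*(d:ℤ)*(e:ℤ)*(e:ℤ) + (360000)*(d:ℤ)*(d:ℤ)*(d:ℤ)*(d:ℤ)*(e:ℤ) := by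
  intro e
  induction e with
  | zero => rw [Finset.Icc_eq_empty (by omega), Finset.sum_empty, mul_zero]; push_cast; try ring
  | succ e ih =>
    rw [Finset.sum_Icc_succ_top (by omega), mul_add, ih]; push_cast; try ring

lemma LIII1 (p q d : ℕ) : ∀ e : ℕ, q ≤ e → (120:ℤ) * (∑ x ∈ Finset.Icc (q+1) e, ((p:ℤ)*(2*(d:ℤ)-(x:ℤ)))) = (-60)*(p:ℤ)*(e:ℤ) + (-60)*(p:ℤ)*(e:ℤ)*(e:ℤ) + (240)*(p:ℤ)*(d:ℤ)*(e:ℤ) + (60)*(p:ℤ)*(q:ℤ) + (-240)*(p:ℤ)*(q:ℤ)*(d:ℤ) + (60)*(p:ℤ)*(q:ℤ)*(q:ℤ) := by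
  intro e he
  induction e, he using Nat.le_induction with
  | base => rw [Finset.Icc_eq_empty (by omega), Finset.sum_empty, mul_zero]; push_cast; try ring
  | succ e he ih =>
    rw [Finset.sum_Icc_succ_top (by omega), mul_add, ih]; push_cast; try ring

lemma LIII2 (p d : ℕ) : ∀ e : ℕ, d ≤ e → (120:ℤ) * (∑ x ∈ Finset.Icc (d+1) e, ((60)*(p:ℤ)*(x:ℤ) + (60)*(p:ℤ)*(x:ℤ)*(x:ℤ) + (-120)*(p:ℤ)*(d:ℤ) + (-240)*(p:ℤ)*(d:ℤ)*(x:ℤ) + (240)*(p:ℤ)*(d:ℤ)*(d:ℤ))) = (4800)*(p:ℤ)*(e:ℤ) + (7200)*(p:ℤ)*(e:ℤ)*(e:ℤ) + (2400)*(p:ℤ)*(e:ℤ)*(e:ℤ)*(e:ℤ) + (-4800)*(p:ℤ)*(d:ℤ) + (-28800)*(p:ℤ)*(d:ℤ)*(e:ℤ) + (-14400)*(p:ℤ)*(d:ℤ)*(e:ℤ)*(e:ℤ) + (21600)*(p:ℤ)*(d:ℤ)*(d:ℤ) + (28800)*(p:ℤ)*(d:ℤ)*(d:ℤ)*(e:ℤ)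 + (-16800)*(p:ℤ)*(d:ℤ)*(d:ℤ)*(d:ℤ) := by
  intro e he
  induction e, he using Nat.le_induction with
  | base => rw [Finset.Icc_eq_empty (by omega), Finset.sum_empty, mul_zero]; push_cast; try ring
  | succ e he ih =>
    rw [Finset.sum_Icc_succ_top (by omega), mul_add, ih]; push_cast; try ring

lemma LIII3 (d : ℕ) : ∀ e : ℕ, (120:ℤ) * (∑ x ∈ Finset.Icc 1 e, ((4800)*(x:ℤ)*(x:ℤ) + (7200)*(x:ℤ)*(x:ℤ)*(x:ℤ) + (2400)*(x:ℤ)*(x:ℤ)*(x:ℤ)*(x:ℤ) + (-14400)*(d:ℤ)*(x:ℤ)*(x:ℤ) + (-7200)*(d:ℤ)*(x:ℤ)*(x:ℤ)*(x:ℤ) + (7200)*(d:ℤ)*(d:ℤ)*(x:ℤ)*(x:ℤ))) = (86400)*(e:ℤ) + (504000)*(e:ℤ)*(e:ℤ) + (720000)*(e:ℤ)*(e:ℤ)*(e:ℤ) + (360000)*(e:ℤ)*(e:ℤ)*(e:ℤ)*(e:ℤ) + (57600)*(e:ℤ)*(e:ℤ)*(e:ℤ)*(e:ℤ)*(e:ℤ)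 + (-288000)*(d:ℤ)*(e:ℤ) + (-1080000)*(d:ℤ)*(e:ℤ)*(e:ℤ) + (-1008000)*(d:ℤ)*(e:ℤ)*(e:ℤ)*(e:ℤ) + (-216000)*(d:ℤ)*(e:ℤ)*(e:ℤ)*(e:ℤ)*(e:ℤ) + (144000)*(d:ℤ)*(d:ℤ)*(e:ℤ) + (432000)*(d:ℤ)*(d:ℤ)*(e:ℤ)*(e:ℤ) + (288000)*(d:ℤ)*(d:ℤ)*(e:ℤ)*(e:ℤ)*(e:ℤ) := by
  intro e
  induction e with
  | zero => rw [Finset.Icc_eq_empty (by omega), Finset.sum_empty, mul_zero]; push_cast; try ring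
  | succ e ih =>
    rw [Finset.sum_Icc_succ_top (by omega), mul_add, ih]; push_cast; try ring

lemma LB1 (p : ℕ) : ∀ e : ℕ, (120:ℤ) * (∑ x ∈ Finset.Icc 1 e, (((p:ℤ)+(x:ℤ))*(x:ℤ))) = (20)*(e:ℤ) + (60)*(e:ℤ)*(e:ℤ) + (40)*(e:ℤ)*(e:ℤ)*(e:ℤ) + (60)*(p:ℤ)*(e:ℤ) + (60)*(p:ℤ)*(e:ℤ)*(e:ℤ) := by
  intro e
  induction e with
  | zero => rw [Finset.Icc_eq_empty (by omega), Finset.sum_empty, mul_zero]; push_cast; try ring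
  | succ e ih =>
    rw [Finset.sum_Icc_succ_top (by omega), mul_add, ih]; push_cast; try ring

lemma LB2 (p d : ℕ) : ∀ e : ℕ, (d+1) ≤ e → (120:ℤ) * (∑ x ∈ Finset.Icc (d+2) e, ((20)*(x:ℤ) + (-60)*(x:ℤ)*(x:ℤ) + (40)*(x:ℤ)*(x:ℤ)*(x:ℤ) + (-20)*(d:ℤ) + (120)*(d:ℤ)*(x:ℤ) + (-120)*(d:ℤ)*(x:ℤ)*(x:ℤ) + (-60)*(d:ℤ)*(d:ℤ) + (120)*(d:ℤ)*(d:ℤ)*(x:ℤ) + (-40)*(d:ℤ)*(d:ℤ)*(d:ℤ) + (-60)*(p:ℤ)*(x:ℤ) + (60)*(p:ℤ)*(x:ℤ)*(x:ℤ) + (60)*(p:ℤ)*(d:ℤ) + (-120)*(p:ℤ)*(d:ℤ)*(x:ℤ) + (60)*(p:ℤ)*(d:ℤ)*(d:ℤ))) = (-1200)*(e:ℤ)*(e:ℤ) + (1200)*(e:ℤ)*(e:ℤ)*(e:ℤ)*(e:ℤ) + (2400)*(d:ℤ)*(e:ℤ) + (-4800)*(d:ℤ)*(e:ℤ)*(e:ℤ)*(e:ℤ)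 + (-1200)*(d:ℤ)*(d:ℤ) + (7200)*(d:ℤ)*(d:ℤ)*(e:ℤ)*(e:ℤ) + (-4800)*(d:ℤ)*(d:ℤ)*(d:ℤ)*(e:ℤ) + (1200)*(d:ℤ)*(d:ℤ)*(d:ℤ)*(d:ℤ) + (-2400)*(p:ℤ)*(e:ℤ) + (2400)*(p:ℤ)*(e:ℤ)*(e:ℤ)*(e:ℤ) + (2400)*(p:ℤ)*(d:ℤ) + (-7200)*(p:ℤ)*(d:ℤ)*(e:ℤ)*(e:ℤ) + (7200)*(p:ℤ)*(d:ℤ)*(d:ℤ)*(e:ℤ) + (-2400)*(p:ℤ)*(d:ℤ)*(d:ℤ)*(d:ℤ) := by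
  intro e he
  induction e, he using Nat.le_induction with
  | base => rw [Finset.Icc_eq_empty (by omega), Finset.sum_empty, mul_zero]; push_cast; try ring
  | succ e he ih =>
    rw [Finset.sum_Icc_succ_top (by omega), mul_add, ih]; push_cast; try ring

lemma LB3 (d : ℕ) : ∀ e : ℕ, (120:ℤ) * (∑ x ∈ Finset.Icc 1 e, ((-3600)*(x:ℤ)*(x:ℤ) + (3600)*(x:ℤ)*(x:ℤ)*(x:ℤ)*(x:ℤ))) = (-86400)*(e:ℤ) + (-216000)*(e:ℤ)*(e:ℤ) + (216000)*(e:ℤ)*(e:ℤ)*(e:ℤ)*(e:ℤ) + (86400)*(e:ℤ)*(e:ℤ)*(e:ℤ)*(e:ℤ)*(e:ℤ) := by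
  intro e
  induction e with
  | zero => rw [Finset.Icc_eq_empty (by omega), Finset.sum_empty, mul_zero]; push_cast; try ring
  | succ e ih =>
    rw [Finset.sum_Icc_succ_top (by omega), mul_add, ih]; push_cast; try ring


def condY (δ y1 y2 y3 y4 : ℕ) : Prop :=
  1 ≤ y1 ∧ y1 ≤ δ ∧ stepN δ y1 y2 ∧ stepN δ y2 y3 ∧ stepN δ y3 y4 ∧ δ+1 ≤ y4

instance (δ y1 y2 y3 y4 : ℕ) : Decidable (condY δ y1 y2 y3 y4) := by
  unfold condY; exact inferInstance

def cond6 (δ : ℕ) (t : ℕ×ℕ×ℕ×ℕ×ℕ×ℕ) : Prop :=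
  (condY δ t.1 t.2.1 t.2.2.1 t.2.2.2.1 ∧
    (1 ≤ t.2.2.2.2.1 ∧ t.2.2.2.2.1 ≤ δ ∧
      (t.2.2.2.2.1 = t.1 ∨ t.2.2.2.2.1 = t.2.1 ∨ t.2.2.2.2.1 = t.2.2.1 ∨
        t.2.2.2.2.1 = t.2.2.2.1))) ∧
  (stepN δ t.2.2.2.2.1 t.2.2.2.2.2 ∧ δ+1 ≤ t.2.2.2.2.2)

instance (δ : ℕ) (t : ℕ×ℕ×ℕ×ℕ×ℕ×ℕ) : Decidable (cond6 δ t) := by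
  unfold cond6; exact inferInstance

def E6 (δ : ℕ) : Finset (ℕ×ℕ×ℕ×ℕ×ℕ×ℕ) :=
  (Finset.range (2*δ+1) ×ˢ Finset.range (2*δ+1) ×ˢ Finset.range (2*δ+1) ×ˢ
    Finset.range (2*δ+1) ×ˢ Finset.range (2*δ+1) ×ˢ Finset.range (2*δ+1)).filter (cond6 δ)

lemma card_eq_E6 (δ : ℕ) :
    Nat.card {p : (Fin 3 → ZMod (2*δ+1)) × (Fin 5 → ZMod (2*δ+1)) //
        IsBasedCycleAtZero (2*δ+1) 3 p.1 ∧ IsBasedCycleAtZero (2*δ+1) 5 p.2 ∧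
        ∀ x : ZMod (2*δ+1), x ∈ Set.range p.1 → rltAdj (2*δ+1) 0 x → x ∈ Set.range p.2}
      = (E6 δ).card := by
  rw [← Nat.card_eq_finsetCard]
  have hval0 : (0 : ZMod (2*δ+1)).val = 0 := ZMod.val_zero
  have hmap : ∀ s : {p : (Fin 3 → ZMod (2*δ+1)) × (Fin 5 → ZMod (2*δ+1)) //
      IsBasedCycleAtZero (2*δ+1) 3 p.1 ∧ IsBasedCycleAtZero (2*δ+1) 5 p.2 ∧
      ∀ x : ZMod (2*δ+1), x ∈ Set.range p.1 → rltAdj (2*δ+1) 0 x → x ∈ Set.range p.2},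
      ((s.1.2 1).val, (s.1.2 2).val, (s.1.2 3).val, (s.1.2 4).val,
        (s.1.1 1).val, (s.1.1 2).val) ∈ E6 δ := by
    rintro ⟨⟨p1, p2⟩, h3c, h5c, hsh⟩
    dsimp only at h3c h5c hsh ⊢
    rw [based3_iff] at h3c
    rw [based5_iff] at h5c
    obtain ⟨g0, g1, g2, g3⟩ := h3c
    obtain ⟨k0, k1, k2, k3, k4, k5⟩ := h5c
    rw [g0] at g1 g3
    rw [k0] at k1 k5
    rw [adj_iff] at g1 g2 g3 k1 k2 k3 k4 k5
    rw [hval0] at g1 g3 k1 k5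
    -- the sharing condition gives the disjunct
    have hx : p1 1 ∈ Set.range p2 := by
      apply hsh (p1 1) ⟨1, rfl⟩
      rw [adj_iff, hval0]
      exact g1
    obtain ⟨k, hk⟩ := hx
    have hane : (p1 1).val ≠ 0 := by unfold stepN at g1; omega
    have hdisj : (p1 1).val = (p2 1).val ∨ (p1 1).val = (p2 2).val ∨
        (p1 1).val = (p2 3).val ∨ (p1 1).val = (p2 4).val := by
      rcases k with ⟨kv, hkv⟩
      interval_cases kv
      · exfalso; apply hane
        have hzz : p2 0 = p1 1 := hk
        rw [← hzz, k0, hval0]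
      · left; rw [← hk]; rfl
      · right; left; rw [← hk]; rfl
      · right; right; left; rw [← hk]; rfl
      · right; right; right; rw [← hk]; rfl
    simp only [E6, cond6, condY, Finset.mem_filter, Finset.mem_product, Finset.mem_range]
    exact ⟨⟨ZMod.val_lt _, ZMod.val_lt _, ZMod.val_lt _, ZMod.val_lt _, ZMod.val_lt _,
        ZMod.val_lt _⟩,
      ⟨⟨by unfold stepN at k1; omega, by unfold stepN at k1; omega, k2, k3, k4,
          by unfold stepN at k5; omega⟩,
        ⟨by unfold stepN at g1; omega, by unfold stepN at g1; omega, hdisj⟩⟩,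
      ⟨g2, by unfold stepN at g3; omega⟩⟩
  apply Nat.card_eq_of_bijective (fun s => ⟨_, hmap s⟩)
  constructor
  · rintro ⟨⟨p1, p2⟩, hp⟩ ⟨⟨q1, q2⟩, hq⟩ h
    simp only [Subtype.mk.injEq, Prod.mk.injEq] at h
    obtain ⟨e1, e2, e3, e4, e5, e6⟩ := h
    dsimp only at hp hq
    have vinj := ZMod.val_injective (2*δ+1)
    apply Subtype.ext
    simp only [Prod.mk.injEq]
    constructor
    · funext i
      fin_cases i
      · show p1 0 = q1 0
        rw [hp.1.1, hq.1.1]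
      · exact vinj e5
      · exact vinj e6
    · funext i
      fin_cases i
      · show p2 0 = q2 0
        rw [hp.2.1.1, hq.2.1.1]
      · exact vinj e1
      · exact vinj e2
      · exact vinj e3
      · exact vinj e4
  · rintro ⟨⟨y1, y2, y3, y4, a, b⟩, ht⟩
    simp only [E6, cond6, condY, Finset.mem_filter, Finset.mem_product, Finset.mem_range] at ht
    obtain ⟨⟨hy1n, hy2n, hy3n, hy4n, han, hbn⟩, ⟨⟨hy11, hy1δ, hst12, hst23, hst34, hy4δ⟩,
      ⟨ha1, haδ, hdisj⟩⟩, hstab, hbδ⟩ := ht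
    set n := 2*δ+1
    have hva : ((a : ZMod n)).val = a := ZMod.val_cast_of_lt han
    have hvb : ((b : ZMod n)).val = b := ZMod.val_cast_of_lt hbn
    have hv1 : ((y1 : ZMod n)).val = y1 := ZMod.val_cast_of_lt hy1n
    have hv2 : ((y2 : ZMod n)).val = y2 := ZMod.val_cast_of_lt hy2n
    have hv3 : ((y3 : ZMod n)).val = y3 := ZMod.val_cast_of_lt hy3n
    have hv4 : ((y4 : ZMod n)).val = y4 := ZMod.val_cast_of_lt hy4n
    refine ⟨⟨(![0, (a : ZMod n), (b : ZMod n)],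
      ![0, (y1 : ZMod n), (y2 : ZMod n), (y3 : ZMod n), (y4 : ZMod n)]), ?_, ?_, ?_⟩, ?_⟩
    · rw [based3_iff]
      refine ⟨rfl, ?_, ?_, ?_⟩
      · show rltAdj n 0 ((a : ZMod n))
        rw [adj_iff, hval0, hva]
        unfold stepN; omega
      · show rltAdj n ((a : ZMod n)) ((b : ZMod n))
        rw [adj_iff, hva, hvb]; exact hstab
      · show rltAdj n ((b : ZMod n)) 0
        rw [adj_iff, hvb, hval0]
        unfold stepN; omega
    · rw [based5_iff]
      refine ⟨rfl, ?_, ?_, ?_, ?_, ?_⟩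
      · show rltAdj n 0 ((y1 : ZMod n))
        rw [adj_iff, hval0, hv1]; unfold stepN; omega
      · show rltAdj n ((y1 : ZMod n)) ((y2 : ZMod n))
        rw [adj_iff, hv1, hv2]; exact hst12
      · show rltAdj n ((y2 : ZMod n)) ((y3 : ZMod n))
        rw [adj_iff, hv2, hv3]; exact hst23
      · show rltAdj n ((y3 : ZMod n)) ((y4 : ZMod n))
        rw [adj_iff, hv3, hv4]; exact hst34
      · show rltAdj n ((y4 : ZMod n)) 0
        rw [adj_iff, hv4, hval0]; unfold stepN; omega
    · intro x hx hadj
      obtain ⟨i, hi⟩ := hx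
      fin_cases i
      · exfalso
        rw [show x = 0 from hi.symm] at hadj
        exact adj_ne hadj rfl
      · have hxa : x = (a : ZMod n) := hi.symm
        subst hxa
        rcases hdisj with h | h | h | h
        · exact ⟨1, by show (y1 : ZMod n) = _; rw [h]⟩
        · exact ⟨2, by show (y2 : ZMod n) = _; rw [h]⟩
        · exact ⟨3, by show (y3 : ZMod n) = _; rw [h]⟩
        · exact ⟨4, by show (y4 : ZMod n) = _; rw [h]⟩
      · exfalso
        rw [show x = (b : ZMod n) from hi.symm] at hadj
        rw [adj_iff, hval0, hvb] at hadj
        unfold stepN at hadj; omega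
    · apply Subtype.ext
      show ((_ : ZMod n).val, _) = _
      simp only [Matrix.cons_val_one, Matrix.head_cons]
      rw [show (![0, (y1 : ZMod n), (y2 : ZMod n), (y3 : ZMod n), (y4 : ZMod n)] 2) = (y2 : ZMod n) from rfl,
        show (![0, (y1 : ZMod n), (y2 : ZMod n), (y3 : ZMod n), (y4 : ZMod n)] 3) = (y3 : ZMod n) from rfl,
        show (![0, (y1 : ZMod n), (y2 : ZMod n), (y3 : ZMod n), (y4 : ZMod n)] 4) = (y4 : ZMod n) from rfl,
        show (![0, (a : ZMod n), (b : ZMod n)] 2) = (b : ZMod n) from rfl]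
      simp only [Matrix.cons_val_zero]
      rw [hva, hvb, hv1, hv2, hv3, hv4]


lemma sum_ite_eq_single {s : Finset ℕ} {c : ℕ} (hc : c ∈ s) (P : ℕ → Prop) [DecidablePred P] :
    ∑ x ∈ s, (if P x ∧ x = c then (x:ℤ) else 0) = if P c then (c:ℤ) else 0 := by
  rw [Finset.sum_eq_single c]
  · simp
  · intro b _ hbc
    rw [if_neg]; exact fun h => hbc h.2
  · intro h; exact absurd hc h

lemma sum_ite_win {n lo hi : ℕ} {P : Prop} [Decidable P] (h : P → hi < n) (f : ℕ → ℤ) :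
    ∑ x ∈ Finset.range n, (if P ∧ (lo ≤ x ∧ x ≤ hi) then f x else 0)
      = if P then ∑ x ∈ Finset.Icc lo hi, f x else 0 := by
  split_ifs with hP
  · have he : Finset.Icc lo hi = (Finset.range n).filter (fun x => lo ≤ x ∧ x ≤ hi) := by
      ext x
      simp only [Finset.mem_Icc, Finset.mem_filter, Finset.mem_range]
      have := h hP
      omega
    rw [he, Finset.sum_filter]
    exact Finset.sum_congr rfl fun x _ => by simp [hP]
  · exact Finset.sum_eq_zero fun x _ => if_neg fun hc => hP hc.1

lemma sum_win {n lo hi : ℕ} (h : hi < n) (f : ℕ → ℤ) :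
    ∑ x ∈ Finset.range n, (if (lo ≤ x ∧ x ≤ hi) then f x else 0)
      = ∑ x ∈ Finset.Icc lo hi, f x := by
  have := sum_ite_win (P := True) (fun _ => h) f (lo := lo)
  simp only [true_and, if_true] at this
  exact this

lemma sum_ite_win_const {n lo hi : ℕ} {P : Prop} [Decidable P] (h : P → hi < n) (v : ℤ) :
    ∑ x ∈ Finset.range n, (if P ∧ (lo ≤ x ∧ x ≤ hi) then v else 0)
      = if P then ((hi + 1 - lo : ℕ) : ℤ) * v else 0 := by
  rw [sum_ite_win h (fun _ => v)]
  split_ifs with hP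
  · rw [Finset.sum_const, Nat.card_Icc, nsmul_eq_mul]
  · rfl

def CI (δ y1 y2 y3 y4 : ℕ) : Prop :=
  (((1 ≤ y1 ∧ y1 ≤ δ) ∧ (y1+1 ≤ y2 ∧ y2 ≤ δ)) ∧ (y2+1 ≤ y3 ∧ y3 ≤ δ)) ∧
    (δ+1 ≤ y4 ∧ y4 ≤ y3+δ)

def CII (δ y1 y2 y3 y4 : ℕ) : Prop :=
  (((1 ≤ y1 ∧ y1 ≤ δ) ∧ (y1+1 ≤ y2 ∧ y2 ≤ δ)) ∧ (δ+1 ≤ y3 ∧ y3 ≤ y2+δ)) ∧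
    (y3+1 ≤ y4 ∧ y4 ≤ 2*δ)

def CIII (δ y1 y2 y3 y4 : ℕ) : Prop :=
  (((1 ≤ y1 ∧ y1 ≤ δ) ∧ (δ+1 ≤ y2 ∧ y2 ≤ y1+δ)) ∧ (y2+1 ≤ y3 ∧ y3 ≤ 2*δ)) ∧
    (y3+1 ≤ y4 ∧ y4 ≤ 2*δ)

def CB (δ y1 y2 y3 y4 : ℕ) : Prop :=
  (((1 ≤ y1 ∧ y1 ≤ δ) ∧ (δ+2 ≤ y2 ∧ y2 ≤ y1+δ)) ∧ (1 ≤ y3 ∧ y3 ≤ y2-(δ+1))) ∧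
    (δ+1 ≤ y4 ∧ y4 ≤ y3+δ)

instance (δ y1 y2 y3 y4 : ℕ) : Decidable (CI δ y1 y2 y3 y4) := by unfold CI; exact inferInstance
instance (δ y1 y2 y3 y4 : ℕ) : Decidable (CII δ y1 y2 y3 y4) := by unfold CII; exact inferInstance
instance (δ y1 y2 y3 y4 : ℕ) : Decidable (CIII δ y1 y2 y3 y4) := by unfold CIII; exact inferInstance
instance (δ y1 y2 y3 y4 : ℕ) : Decidable (CB δ y1 y2 y3 y4) := by unfold CB; exact inferInstance

set_option maxHeartbeats 4000000 in
lemma split_pieces (δ y1 y2 y3 y4 : ℕ) (h1 : y1 < 2*δ+1) (h2 : y2 < 2*δ+1)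
    (h3 : y3 < 2*δ+1) (h4 : y4 < 2*δ+1) :
    (if condY δ y1 y2 y3 y4 then
      ((if 1 ≤ y1 ∧ y1 ≤ δ then (y1:ℤ) else 0) + (if 1 ≤ y2 ∧ y2 ≤ δ then (y2:ℤ) else 0) +
       (if 1 ≤ y3 ∧ y3 ≤ δ then (y3:ℤ) else 0) + (if 1 ≤ y4 ∧ y4 ≤ δ then (y4:ℤ) else 0))
      else 0)
    = (if CI δ y1 y2 y3 y4 then (y1:ℤ)+(y2:ℤ)+(y3:ℤ) else 0)
      + (if CII δ y1 y2 y3 y4 then (y1:ℤ)+(y2:ℤ) else 0)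
      + (if CIII δ y1 y2 y3 y4 then (y1:ℤ) else 0)
      + (if CB δ y1 y2 y3 y4 then (y1:ℤ)+(y3:ℤ) else 0) := by
  unfold condY stepN CI CII CIII CB
  split_ifs <;> omega


lemma pieceI_reduce (δ : ℕ) :
    ∑ y1 ∈ Finset.range (2*δ+1), ∑ y2 ∈ Finset.range (2*δ+1), ∑ y3 ∈ Finset.range (2*δ+1),
      ∑ y4 ∈ Finset.range (2*δ+1), (if CI δ y1 y2 y3 y4 then (y1:ℤ)+(y2:ℤ)+(y3:ℤ) else 0)
    = ∑ y1 ∈ Finset.Icc 1 δ, ∑ y2 ∈ Finset.Icc (y1+1) δ, ∑ y3 ∈ Finset.Icc (y2+1) δ,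
      ((y1:ℤ)+(y2:ℤ)+(y3:ℤ))*(y3:ℤ) := by
  have h4 : ∀ y1 y2 y3 : ℕ, (∑ y4 ∈ Finset.range (2*δ+1),
      (if CI δ y1 y2 y3 y4 then (y1:ℤ)+(y2:ℤ)+(y3:ℤ) else 0))
      = if ((1 ≤ y1 ∧ y1 ≤ δ) ∧ (y1+1 ≤ y2 ∧ y2 ≤ δ)) ∧ (y2+1 ≤ y3 ∧ y3 ≤ δ) then
          ((y1:ℤ)+(y2:ℤ)+(y3:ℤ))*(y3:ℤ) else 0 := by
    intro y1 y2 y3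
    unfold CI
    rw [sum_ite_win_const (fun hP => by omega) _]
    split_ifs with hP
    · rw [show (y3+δ+1-(δ+1) : ℕ) = y3 from by omega]; ring
    · rfl
  simp only [h4]
  have h3 : ∀ y1 y2 : ℕ, (∑ y3 ∈ Finset.range (2*δ+1),
      (if ((1 ≤ y1 ∧ y1 ≤ δ) ∧ (y1+1 ≤ y2 ∧ y2 ≤ δ)) ∧ (y2+1 ≤ y3 ∧ y3 ≤ δ) then
        ((y1:ℤ)+(y2:ℤ)+(y3:ℤ))*(y3:ℤ) else 0))
      = if (1 ≤ y1 ∧ y1 ≤ δ) ∧ (y1+1 ≤ y2 ∧ y2 ≤ δ) then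
          (∑ y3 ∈ Finset.Icc (y2+1) δ, ((y1:ℤ)+(y2:ℤ)+(y3:ℤ))*(y3:ℤ)) else 0 :=
    fun y1 y2 => sum_ite_win (fun _ => by omega) _
  simp only [h3]
  have h2 : ∀ y1 : ℕ, (∑ y2 ∈ Finset.range (2*δ+1),
      (if (1 ≤ y1 ∧ y1 ≤ δ) ∧ (y1+1 ≤ y2 ∧ y2 ≤ δ) then
        (∑ y3 ∈ Finset.Icc (y2+1) δ, ((y1:ℤ)+(y2:ℤ)+(y3:ℤ))*(y3:ℤ)) else 0))
      = if (1 ≤ y1 ∧ y1 ≤ δ) then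
          ∑ y2 ∈ Finset.Icc (y1+1) δ, ∑ y3 ∈ Finset.Icc (y2+1) δ,
            ((y1:ℤ)+(y2:ℤ)+(y3:ℤ))*(y3:ℤ) else 0 :=
    fun y1 => sum_ite_win (fun _ => by omega) _
  simp only [h2]
  exact sum_win (by omega) _

lemma pieceII_reduce (δ : ℕ) :
    ∑ y1 ∈ Finset.range (2*δ+1), ∑ y2 ∈ Finset.range (2*δ+1), ∑ y3 ∈ Finset.range (2*δ+1),
      ∑ y4 ∈ Finset.range (2*δ+1), (if CII δ y1 y2 y3 y4 then (y1:ℤ)+(y2:ℤ) else 0)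
    = ∑ y1 ∈ Finset.Icc 1 δ, ∑ y2 ∈ Finset.Icc (y1+1) δ, ∑ y3 ∈ Finset.Icc (δ+1) (y2+δ),
      ((y1:ℤ)+(y2:ℤ))*(2*(δ:ℤ)-(y3:ℤ)) := by
  have h4 : ∀ y1 y2 y3 : ℕ, (∑ y4 ∈ Finset.range (2*δ+1),
      (if CII δ y1 y2 y3 y4 then (y1:ℤ)+(y2:ℤ) else 0))
      = if ((1 ≤ y1 ∧ y1 ≤ δ) ∧ (y1+1 ≤ y2 ∧ y2 ≤ δ)) ∧ (δ+1 ≤ y3 ∧ y3 ≤ y2+δ) then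
          ((y1:ℤ)+(y2:ℤ))*(2*(δ:ℤ)-(y3:ℤ)) else 0 := by
    intro y1 y2 y3
    unfold CII
    rw [sum_ite_win_const (fun hP => by omega) _]
    split_ifs with hP
    · have hc : ((2*δ+1-(y3+1) : ℕ) : ℤ) = 2*(δ:ℤ)-(y3:ℤ) := by omega
      rw [show (2*δ+1-(y3+1) : ℕ) = 2*δ+1-(y3+1) from rfl, hc]; ring
    · rfl
  simp only [h4]
  have h3 : ∀ y1 y2 : ℕ, (∑ y3 ∈ Finset.range (2*δ+1),
      (if ((1 ≤ y1 ∧ y1 ≤ δ) ∧ (y1+1 ≤ y2 ∧ y2 ≤ δ)) ∧ (δ+1 ≤ y3 ∧ y3 ≤ y2+δ) then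
        ((y1:ℤ)+(y2:ℤ))*(2*(δ:ℤ)-(y3:ℤ)) else 0))
      = if (1 ≤ y1 ∧ y1 ≤ δ) ∧ (y1+1 ≤ y2 ∧ y2 ≤ δ) then
          (∑ y3 ∈ Finset.Icc (δ+1) (y2+δ), ((y1:ℤ)+(y2:ℤ))*(2*(δ:ℤ)-(y3:ℤ))) else 0 :=
    fun y1 y2 => sum_ite_win (fun hP => by omega) _
  simp only [h3]
  have h2 : ∀ y1 : ℕ, (∑ y2 ∈ Finset.range (2*δ+1),
      (if (1 ≤ y1 ∧ y1 ≤ δ) ∧ (y1+1 ≤ y2 ∧ y2 ≤ δ) then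
        (∑ y3 ∈ Finset.Icc (δ+1) (y2+δ), ((y1:ℤ)+(y2:ℤ))*(2*(δ:ℤ)-(y3:ℤ))) else 0))
      = if (1 ≤ y1 ∧ y1 ≤ δ) then
          ∑ y2 ∈ Finset.Icc (y1+1) δ, ∑ y3 ∈ Finset.Icc (δ+1) (y2+δ),
            ((y1:ℤ)+(y2:ℤ))*(2*(δ:ℤ)-(y3:ℤ)) else 0 :=
    fun y1 => sum_ite_win (fun _ => by omega) _
  simp only [h2]
  exact sum_win (by omega) _

lemma pieceIII_reduce (δ : ℕ) :
    ∑ y1 ∈ Finset.range (2*δ+1), ∑ y2 ∈ Finset.range (2*δ+1), ∑ y3 ∈ Finset.range (2*δ+1),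
      ∑ y4 ∈ Finset.range (2*δ+1), (if CIII δ y1 y2 y3 y4 then (y1:ℤ) else 0)
    = ∑ y1 ∈ Finset.Icc 1 δ, ∑ y2 ∈ Finset.Icc (δ+1) (y1+δ), ∑ y3 ∈ Finset.Icc (y2+1) (2*δ),
      (y1:ℤ)*(2*(δ:ℤ)-(y3:ℤ)) := by
  have h4 : ∀ y1 y2 y3 : ℕ, (∑ y4 ∈ Finset.range (2*δ+1),
      (if CIII δ y1 y2 y3 y4 then (y1:ℤ) else 0))
      = if ((1 ≤ y1 ∧ y1 ≤ δ) ∧ (δ+1 ≤ y2 ∧ y2 ≤ y1+δ)) ∧ (y2+1 ≤ y3 ∧ y3 ≤ 2*δ) then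
          (y1:ℤ)*(2*(δ:ℤ)-(y3:ℤ)) else 0 := by
    intro y1 y2 y3
    unfold CIII
    rw [sum_ite_win_const (fun hP => by omega) _]
    split_ifs with hP
    · have hc : ((2*δ+1-(y3+1) : ℕ) : ℤ) = 2*(δ:ℤ)-(y3:ℤ) := by omega
      rw [show (2*δ+1-(y3+1) : ℕ) = 2*δ+1-(y3+1) from rfl, hc]; ring
    · rfl
  simp only [h4]
  have h3 : ∀ y1 y2 : ℕ, (∑ y3 ∈ Finset.range (2*δ+1),
      (if ((1 ≤ y1 ∧ y1 ≤ δ) ∧ (δ+1 ≤ y2 ∧ y2 ≤ y1+δ)) ∧ (y2+1 ≤ y3 ∧ y3 ≤ 2*δ) then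
        (y1:ℤ)*(2*(δ:ℤ)-(y3:ℤ)) else 0))
      = if (1 ≤ y1 ∧ y1 ≤ δ) ∧ (δ+1 ≤ y2 ∧ y2 ≤ y1+δ) then
          (∑ y3 ∈ Finset.Icc (y2+1) (2*δ), (y1:ℤ)*(2*(δ:ℤ)-(y3:ℤ))) else 0 :=
    fun y1 y2 => sum_ite_win (fun _ => by omega) _
  simp only [h3]
  have h2 : ∀ y1 : ℕ, (∑ y2 ∈ Finset.range (2*δ+1),
      (if (1 ≤ y1 ∧ y1 ≤ δ) ∧ (δ+1 ≤ y2 ∧ y2 ≤ y1+δ) then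
        (∑ y3 ∈ Finset.Icc (y2+1) (2*δ), (y1:ℤ)*(2*(δ:ℤ)-(y3:ℤ))) else 0))
      = if (1 ≤ y1 ∧ y1 ≤ δ) then
          ∑ y2 ∈ Finset.Icc (δ+1) (y1+δ), ∑ y3 ∈ Finset.Icc (y2+1) (2*δ),
            (y1:ℤ)*(2*(δ:ℤ)-(y3:ℤ)) else 0 :=
    fun y1 => sum_ite_win (fun hP => by omega) _
  simp only [h2]
  exact sum_win (by omega) _

lemma pieceB_reduce (δ : ℕ) :
    ∑ y1 ∈ Finset.range (2*δ+1), ∑ y2 ∈ Finset.range (2*δ+1), ∑ y3 ∈ Finset.range (2*δ+1),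
      ∑ y4 ∈ Finset.range (2*δ+1), (if CB δ y1 y2 y3 y4 then (y1:ℤ)+(y3:ℤ) else 0)
    = ∑ y1 ∈ Finset.Icc 1 δ, ∑ y2 ∈ Finset.Icc (δ+2) (y1+δ), ∑ y3 ∈ Finset.Icc 1 (y2-(δ+1)),
      ((y1:ℤ)+(y3:ℤ))*(y3:ℤ) := by
  have h4 : ∀ y1 y2 y3 : ℕ, (∑ y4 ∈ Finset.range (2*δ+1),
      (if CB δ y1 y2 y3 y4 then (y1:ℤ)+(y3:ℤ) else 0))
      = if ((1 ≤ y1 ∧ y1 ≤ δ) ∧ (δ+2 ≤ y2 ∧ y2 ≤ y1+δ)) ∧ (1 ≤ y3 ∧ y3 ≤ y2-(δ+1)) then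
          ((y1:ℤ)+(y3:ℤ))*(y3:ℤ) else 0 := by
    intro y1 y2 y3
    unfold CB
    rw [sum_ite_win_const (fun hP => by omega) _]
    split_ifs with hP
    · rw [show (y3+δ+1-(δ+1) : ℕ) = y3 from by omega]; ring
    · rfl
  simp only [h4]
  have h3 : ∀ y1 y2 : ℕ, (∑ y3 ∈ Finset.range (2*δ+1),
      (if ((1 ≤ y1 ∧ y1 ≤ δ) ∧ (δ+2 ≤ y2 ∧ y2 ≤ y1+δ)) ∧ (1 ≤ y3 ∧ y3 ≤ y2-(δ+1)) then
        ((y1:ℤ)+(y3:ℤ))*(y3:ℤ) else 0))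
      = if (1 ≤ y1 ∧ y1 ≤ δ) ∧ (δ+2 ≤ y2 ∧ y2 ≤ y1+δ) then
          (∑ y3 ∈ Finset.Icc 1 (y2-(δ+1)), ((y1:ℤ)+(y3:ℤ))*(y3:ℤ)) else 0 :=
    fun y1 y2 => sum_ite_win (fun hP => by omega) _
  simp only [h3]
  have h2 : ∀ y1 : ℕ, (∑ y2 ∈ Finset.range (2*δ+1),
      (if (1 ≤ y1 ∧ y1 ≤ δ) ∧ (δ+2 ≤ y2 ∧ y2 ≤ y1+δ) then
        (∑ y3 ∈ Finset.Icc 1 (y2-(δ+1)), ((y1:ℤ)+(y3:ℤ))*(y3:ℤ)) else 0))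
      = if (1 ≤ y1 ∧ y1 ≤ δ) then
          ∑ y2 ∈ Finset.Icc (δ+2) (y1+δ), ∑ y3 ∈ Finset.Icc 1 (y2-(δ+1)),
            ((y1:ℤ)+(y3:ℤ))*(y3:ℤ) else 0 :=
    fun y1 => sum_ite_win (fun hP => by omega) _
  simp only [h2]
  exact sum_win (by omega) _


lemma card_E6_eq (δ : ℕ) :
    ((E6 δ).card : ℤ)
      = (∑ y1 ∈ Finset.Icc 1 δ, ∑ y2 ∈ Finset.Icc (y1+1) δ, ∑ y3 ∈ Finset.Icc (y2+1) δ,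
          ((y1:ℤ)+(y2:ℤ)+(y3:ℤ))*(y3:ℤ))
      + (∑ y1 ∈ Finset.Icc 1 δ, ∑ y2 ∈ Finset.Icc (y1+1) δ, ∑ y3 ∈ Finset.Icc (δ+1) (y2+δ),
          ((y1:ℤ)+(y2:ℤ))*(2*(δ:ℤ)-(y3:ℤ)))
      + (∑ y1 ∈ Finset.Icc 1 δ, ∑ y2 ∈ Finset.Icc (δ+1) (y1+δ), ∑ y3 ∈ Finset.Icc (y2+1) (2*δ),
          (y1:ℤ)*(2*(δ:ℤ)-(y3:ℤ)))
      + (∑ y1 ∈ Finset.Icc 1 δ, ∑ y2 ∈ Finset.Icc (δ+2) (y1+δ), ∑ y3 ∈ Finset.Icc 1 (y2-(δ+1)),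
          ((y1:ℤ)+(y3:ℤ))*(y3:ℤ)) := by
  have hA : ((E6 δ).card : ℤ) = ∑ y1 ∈ Finset.range (2*δ+1), ∑ y2 ∈ Finset.range (2*δ+1),
      ∑ y3 ∈ Finset.range (2*δ+1), ∑ y4 ∈ Finset.range (2*δ+1), ∑ a ∈ Finset.range (2*δ+1),
      ∑ b ∈ Finset.range (2*δ+1), (if cond6 δ (y1,y2,y3,y4,a,b) then (1:ℤ) else 0) := by
    rw [E6, Finset.card_filter]
    push_cast
    simp only [Finset.sum_product]
  rw [hA]
  have hB : ∀ y1 ∈ Finset.range (2*δ+1), ∀ y2 ∈ Finset.range (2*δ+1),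
      ∀ y3 ∈ Finset.range (2*δ+1), ∀ y4 ∈ Finset.range (2*δ+1),
      (∑ a ∈ Finset.range (2*δ+1), ∑ b ∈ Finset.range (2*δ+1),
        (if cond6 δ (y1,y2,y3,y4,a,b) then (1:ℤ) else 0))
      = if condY δ y1 y2 y3 y4 then
          ((if 1 ≤ y1 ∧ y1 ≤ δ then (y1:ℤ) else 0) + (if 1 ≤ y2 ∧ y2 ≤ δ then (y2:ℤ) else 0) +
           (if 1 ≤ y3 ∧ y3 ≤ δ then (y3:ℤ) else 0) + (if 1 ≤ y4 ∧ y4 ≤ δ then (y4:ℤ) else 0))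
          else 0 := by
    intro y1 hy1 y2 hy2 y3 hy3 y4 hy4
    by_cases hY : condY δ y1 y2 y3 y4
    · rw [if_pos hY]
      have hb : ∀ a ∈ Finset.range (2*δ+1),
          (∑ b ∈ Finset.range (2*δ+1), (if cond6 δ (y1,y2,y3,y4,a,b) then (1:ℤ) else 0))
          = if 1 ≤ a ∧ a ≤ δ ∧ (a = y1 ∨ a = y2 ∨ a = y3 ∨ a = y4) then (a:ℤ) else 0 := by
        intro a _
        by_cases ha : 1 ≤ a ∧ a ≤ δ ∧ (a = y1 ∨ a = y2 ∨ a = y3 ∨ a = y4)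
        · rw [if_pos ha]
          have hcond : ∀ b, cond6 δ (y1,y2,y3,y4,a,b) ↔ (stepN δ a b ∧ δ+1 ≤ b) := by
            intro b
            constructor
            · exact fun h => h.2
            · exact fun h => ⟨⟨hY, ha.1, ha.2.1, ha.2.2⟩, h⟩
          simp only [hcond]
          rw [← Finset.sum_filter]
          rw [Finset.sum_const, nsmul_eq_mul, mul_one]
          have hfe : (Finset.range (2*δ+1)).filter (fun b => stepN δ a b ∧ δ+1 ≤ b)
              = Finset.Icc (δ+1) (δ+a) := by
            ext b
            simp only [Finset.mem_filter, Finset.mem_range, Finset.mem_Icc]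
            unfold stepN
            omega
          rw [hfe, Nat.card_Icc, show δ+a+1-(δ+1) = a from by omega]
        · rw [if_neg ha]
          apply Finset.sum_eq_zero; intro b _
          rw [if_neg]
          intro hc
          exact ha ⟨hc.1.2.1, hc.1.2.2.1, hc.1.2.2.2⟩
      rw [Finset.sum_congr rfl hb]
      have hdist : y1 ≠ y2 ∧ y1 ≠ y3 ∧ y1 ≠ y4 ∧ y2 ≠ y3 ∧ y2 ≠ y4 ∧ y3 ≠ y4 := by
        unfold condY stepN at hY
        omega
      have hsplit : ∀ a : ℕ,
          (if 1 ≤ a ∧ a ≤ δ ∧ (a = y1 ∨ a = y2 ∨ a = y3 ∨ a = y4) then (a:ℤ) else 0)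
          = (if (1 ≤ a ∧ a ≤ δ) ∧ a = y1 then (a:ℤ) else 0)
            + (if (1 ≤ a ∧ a ≤ δ) ∧ a = y2 then (a:ℤ) else 0)
            + (if (1 ≤ a ∧ a ≤ δ) ∧ a = y3 then (a:ℤ) else 0)
            + (if (1 ≤ a ∧ a ≤ δ) ∧ a = y4 then (a:ℤ) else 0) := by
        intro a
        obtain ⟨d1, d2, d3, d4, d5, d6⟩ := hdist
        split_ifs <;> omega
      simp only [hsplit]
      rw [Finset.sum_add_distrib, Finset.sum_add_distrib, Finset.sum_add_distrib,
        sum_ite_eq_single hy1 (fun a => 1 ≤ a ∧ a ≤ δ),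
        sum_ite_eq_single hy2 (fun a => 1 ≤ a ∧ a ≤ δ),
        sum_ite_eq_single hy3 (fun a => 1 ≤ a ∧ a ≤ δ),
        sum_ite_eq_single hy4 (fun a => 1 ≤ a ∧ a ≤ δ)]
    · rw [if_neg hY]
      apply Finset.sum_eq_zero; intro a _
      apply Finset.sum_eq_zero; intro b _
      rw [if_neg]
      exact fun hc => hY hc.1.1
  rw [Finset.sum_congr rfl (fun y1 hy1 => Finset.sum_congr rfl (fun y2 hy2 =>
    Finset.sum_congr rfl (fun y3 hy3 => Finset.sum_congr rfl (fun y4 hy4 =>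
      hB y1 hy1 y2 hy2 y3 hy3 y4 hy4))))]
  rw [Finset.sum_congr rfl (fun y1 hy1 => Finset.sum_congr rfl (fun y2 hy2 =>
    Finset.sum_congr rfl (fun y3 hy3 => Finset.sum_congr rfl (fun y4 hy4 =>
      split_pieces δ y1 y2 y3 y4 (Finset.mem_range.mp hy1) (Finset.mem_range.mp hy2)
        (Finset.mem_range.mp hy3) (Finset.mem_range.mp hy4)))))]
  simp only [Finset.sum_add_distrib]
  rw [pieceI_reduce, pieceII_reduce, pieceIII_reduce, pieceB_reduce]


lemma pieceI_value (δ : ℕ) :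
    (1728000:ℤ) * (∑ y1 ∈ Finset.Icc 1 δ, ∑ y2 ∈ Finset.Icc (y1+1) δ, ∑ y3 ∈ Finset.Icc (y2+1) δ, ((y1:ℤ)+(y2:ℤ)+(y3:ℤ))*(y3:ℤ))
      = (518400)*(δ:ℤ) + (432000)*(δ:ℤ)*(δ:ℤ) + (-864000)*(δ:ℤ)*(δ:ℤ)*(δ:ℤ) + (-432000)*(δ:ℤ)*(δ:ℤ)*(δ:ℤ)*(δ:ℤ) + (345600)*(δ:ℤ)*(δ:ℤ)*(δ:ℤ)*(δ:ℤ)*(δ:ℤ) := by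
  have h1 : ∀ y1 ∈ Finset.Icc 1 δ,
      (14400:ℤ) * (∑ y2 ∈ Finset.Icc (y1+1) δ, ∑ y3 ∈ Finset.Icc (y2+1) δ, ((y1:ℤ)+(y2:ℤ)+(y3:ℤ))*(y3:ℤ))
        = (3600)*(y1:ℤ) + (16200)*(y1:ℤ)*(y1:ℤ) + (18000)*(y1:ℤ)*(y1:ℤ)*(y1:ℤ) + (5400)*(y1:ℤ)*(y1:ℤ)*(y1:ℤ)*(y1:ℤ) + (-3600)*(δ:ℤ) + (-10800)*(δ:ℤ)*(y1:ℤ) + (-10800)*(δ:ℤ)*(y1:ℤ)*(y1:ℤ) + (-5400)*(δ:ℤ)*(δ:ℤ) + (-10800)*(δ:ℤ)*(δ:ℤ)*(y1:ℤ) + (-10800)*(δ:ℤ)*(δ:ℤ)*(y1:ℤ)*(y1:ℤ) + (3600)*(δ:ℤ)*(δ:ℤ)*(δ:ℤ) + (5400)*(δ:ℤ)*(δ:ℤ)*(δ:ℤ)*(δ:ℤ) := by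
    intro y1 hy1
    have hy1d : y1 ≤ δ := (Finset.mem_Icc.mp hy1).2
    have hy11 : 1 ≤ y1 := (Finset.mem_Icc.mp hy1).1
    have h2 : ∀ y2 ∈ Finset.Icc (y1+1) δ,
        (120:ℤ) * (∑ y3 ∈ Finset.Icc (y2+1) δ, ((y1:ℤ)+(y2:ℤ)+(y3:ℤ))*(y3:ℤ)) = (-20)*(y2:ℤ) + (-120)*(y2:ℤ)*(y2:ℤ) + (-100)*(y2:ℤ)*(y2:ℤ)*(y2:ℤ) + (20)*(δ:ℤ) + (60)*(δ:ℤ)*(y2:ℤ) + (60)*(δ:ℤ)*(δ:ℤ) + (60)*(δ:ℤ)*(δ:ℤ)*(y2:ℤ) + (40)*(δ:ℤ)*(δ:ℤ)*(δ:ℤ) + (-60)*(y1:ℤ)*(y2:ℤ) + (-60)*(y1:ℤ)*(y2:ℤ)*(y2:ℤ) + (60)*(y1:ℤ)*(δ:ℤ) + (60)*(y1:ℤ)*(δ:ℤ)*(δ:ℤ) := by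
      intro y2 hy2
      have hm := Finset.mem_Icc.mp hy2
      refine (LI1 y1 y2 δ (by omega)).trans ?_
      push_cast
      ring
    calc (14400:ℤ) * (∑ y2 ∈ Finset.Icc (y1+1) δ, ∑ y3 ∈ Finset.Icc (y2+1) δ, ((y1:ℤ)+(y2:ℤ)+(y3:ℤ))*(y3:ℤ))
        = (120:ℤ) * ∑ y2 ∈ Finset.Icc (y1+1) δ, ((120:ℤ) * (∑ y3 ∈ Finset.Icc (y2+1) δ, ((y1:ℤ)+(y2:ℤ)+(y3:ℤ))*(y3:ℤ))) := by
          rw [Finset.mul_sum, Finset.mul_sum]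
          exact Finset.sum_congr rfl fun x _ => by ring
      _ = (120:ℤ) * ∑ y2 ∈ Finset.Icc (y1+1) δ, ((-20)*(y2:ℤ) + (-120)*(y2:ℤ)*(y2:ℤ) + (-100)*(y2:ℤ)*(y2:ℤ)*(y2:ℤ) + (20)*(δ:ℤ) + (60)*(δ:ℤ)*(y2:ℤ) + (60)*(δ:ℤ)*(δ:ℤ) + (60)*(δ:ℤ)*(δ:ℤ)*(y2:ℤ) + (40)*(δ:ℤ)*(δ:ℤ)*(δ:ℤ) + (-60)*(y1:ℤ)*(y2:ℤ) + (-60)*(y1:ℤ)*(y2:ℤ)*(y2:ℤ) + (60)*(y1:ℤ)*(δ:ℤ) + (60)*(y1:ℤ)*(δ:ℤ)*(δ:ℤ)) := by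
          rw [Finset.sum_congr rfl h2]
      _ = (3600)*(y1:ℤ) + (16200)*(y1:ℤ)*(y1:ℤ) + (18000)*(y1:ℤ)*(y1:ℤ)*(y1:ℤ) + (5400)*(y1:ℤ)*(y1:ℤ)*(y1:ℤ)*(y1:ℤ) + (-3600)*(δ:ℤ) + (-10800)*(δ:ℤ)*(y1:ℤ) + (-10800)*(δ:ℤ)*(y1:ℤ)*(y1:ℤ) + (-5400)*(δ:ℤ)*(δ:ℤ) + (-10800)*(δ:ℤ)*(δ:ℤ)*(y1:ℤ) + (-10800)*(δ:ℤ)*(δ:ℤ)*(y1:ℤ)*(y1:ℤ) + (3600)*(δ:ℤ)*(δ:ℤ)*(δ:ℤ) + (5400)*(δ:ℤ)*(δ:ℤ)*(δ:ℤ)*(δ:ℤ) := (LI2 y1 δ δ hy1d).trans (by push_cast; ring)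
  calc (1728000:ℤ) * (∑ y1 ∈ Finset.Icc 1 δ, ∑ y2 ∈ Finset.Icc (y1+1) δ, ∑ y3 ∈ Finset.Icc (y2+1) δ, ((y1:ℤ)+(y2:ℤ)+(y3:ℤ))*(y3:ℤ))
      = (120:ℤ) * ∑ y1 ∈ Finset.Icc 1 δ, ((14400:ℤ) * (∑ y2 ∈ Finset.Icc (y1+1) δ, ∑ y3 ∈ Finset.Icc (y2+1) δ, ((y1:ℤ)+(y2:ℤ)+(y3:ℤ))*(y3:ℤ))) := by
        rw [Finset.mul_sum, Finset.mul_sum]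
        exact Finset.sum_congr rfl fun x _ => by ring
    _ = (120:ℤ) * ∑ y1 ∈ Finset.Icc 1 δ, ((3600)*(y1:ℤ) + (16200)*(y1:ℤ)*(y1:ℤ) + (18000)*(y1:ℤ)*(y1:ℤ)*(y1:ℤ) + (5400)*(y1:ℤ)*(y1:ℤ)*(y1:ℤ)*(y1:ℤ) + (-3600)*(δ:ℤ) + (-10800)*(δ:ℤ)*(y1:ℤ) + (-10800)*(δ:ℤ)*(y1:ℤ)*(y1:ℤ) + (-5400)*(δ:ℤ)*(δ:ℤ) + (-10800)*(δ:ℤ)*(δ:ℤ)*(y1:ℤ) + (-10800)*(δ:ℤ)*(δ:ℤ)*(y1:ℤ)*(y1:ℤ) + (3600)*(δ:ℤ)*(δ:ℤ)*(δ:ℤ) + (5400)*(δ:ℤ)*(δ:ℤ)*(δ:ℤ)*(δ:ℤ)) := by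
        rw [Finset.sum_congr rfl h1]
    _ = (518400)*(δ:ℤ) + (432000)*(δ:ℤ)*(δ:ℤ) + (-864000)*(δ:ℤ)*(δ:ℤ)*(δ:ℤ) + (-432000)*(δ:ℤ)*(δ:ℤ)*(δ:ℤ)*(δ:ℤ) + (345600)*(δ:ℤ)*(δ:ℤ)*(δ:ℤ)*(δ:ℤ)*(δ:ℤ) := (LI3 δ δ).trans (by push_cast; ring)


lemma pieceII_value (δ : ℕ) :
    (1728000:ℤ) * (∑ y1 ∈ Finset.Icc 1 δ, ∑ y2 ∈ Finset.Icc (y1+1) δ, ∑ y3 ∈ Finset.Icc (δ+1) (y2+δ), ((y1:ℤ)+(y2:ℤ))*(2*(δ:ℤ)-(y3:ℤ)))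
      = (259200)*(δ:ℤ) + (216000)*(δ:ℤ)*(δ:ℤ) + (-648000)*(δ:ℤ)*(δ:ℤ)*(δ:ℤ) + (-216000)*(δ:ℤ)*(δ:ℤ)*(δ:ℤ)*(δ:ℤ) + (388800)*(δ:ℤ)*(δ:ℤ)*(δ:ℤ)*(δ:ℤ)*(δ:ℤ) := by
  have h1 : ∀ y1 ∈ Finset.Icc 1 δ,
      (14400:ℤ) * (∑ y2 ∈ Finset.Icc (y1+1) δ, ∑ y3 ∈ Finset.Icc (δ+1) (y2+δ), ((y1:ℤ)+(y2:ℤ))*(2*(δ:ℤ)-(y3:ℤ)))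
        = (1200)*(y1:ℤ) + (10200)*(y1:ℤ)*(y1:ℤ) + (13200)*(y1:ℤ)*(y1:ℤ)*(y1:ℤ) + (4200)*(y1:ℤ)*(y1:ℤ)*(y1:ℤ)*(y1:ℤ) + (-1200)*(δ:ℤ) + (-7200)*(δ:ℤ)*(y1:ℤ) + (-14400)*(δ:ℤ)*(y1:ℤ)*(y1:ℤ) + (-12000)*(δ:ℤ)*(y1:ℤ)*(y1:ℤ)*(y1:ℤ) + (-3000)*(δ:ℤ)*(δ:ℤ) + (1200)*(δ:ℤ)*(δ:ℤ)*(δ:ℤ) + (4800)*(δ:ℤ)*(δ:ℤ)*(δ:ℤ)*(y1:ℤ) + (3000)*(δ:ℤ)*(δ:ℤ)*(δ:ℤ)*(δ:ℤ) := by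
    intro y1 hy1
    have hy1d : y1 ≤ δ := (Finset.mem_Icc.mp hy1).2
    have hy11 : 1 ≤ y1 := (Finset.mem_Icc.mp hy1).1
    have h2 : ∀ y2 ∈ Finset.Icc (y1+1) δ,
        (120:ℤ) * (∑ y3 ∈ Finset.Icc (δ+1) (y2+δ), ((y1:ℤ)+(y2:ℤ))*(2*(δ:ℤ)-(y3:ℤ))) = (-60)*(y2:ℤ)*(y2:ℤ) + (-60)*(y2:ℤ)*(y2:ℤ)*(y2:ℤ) + (120)*(δ:ℤ)*(y2:ℤ)*(y2:ℤ) + (-60)*(y1:ℤ)*(y2:ℤ) + (-60)*(y1:ℤ)*(y2:ℤ)*(y2:ℤ) + (120)*(y1:ℤ)*(δ:ℤ)*(y2:ℤ) := by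
      intro y2 hy2
      have hm := Finset.mem_Icc.mp hy2
      refine (LII1 y1 y2 δ (y2+δ) (by omega)).trans ?_
      push_cast
      ring
    calc (14400:ℤ) * (∑ y2 ∈ Finset.Icc (y1+1) δ, ∑ y3 ∈ Finset.Icc (δ+1) (y2+δ), ((y1:ℤ)+(y2:ℤ))*(2*(δ:ℤ)-(y3:ℤ)))
        = (120:ℤ) * ∑ y2 ∈ Finset.Icc (y1+1) δ, ((120:ℤ) * (∑ y3 ∈ Finset.Icc (δ+1) (y2+δ), ((y1:ℤ)+(y2:ℤ))*(2*(δ:ℤ)-(y3:ℤ)))) := by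
          rw [Finset.mul_sum, Finset.mul_sum]
          exact Finset.sum_congr rfl fun x _ => by ring
      _ = (120:ℤ) * ∑ y2 ∈ Finset.Icc (y1+1) δ, ((-60)*(y2:ℤ)*(y2:ℤ) + (-60)*(y2:ℤ)*(y2:ℤ)*(y2:ℤ) + (120)*(δ:ℤ)*(y2:ℤ)*(y2:ℤ) + (-60)*(y1:ℤ)*(y2:ℤ) + (-60)*(y1:ℤ)*(y2:ℤ)*(y2:ℤ) + (120)*(y1:ℤ)*(δ:ℤ)*(y2:ℤ)) := by
          rw [Finset.sum_congr rfl h2]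
      _ = (1200)*(y1:ℤ) + (10200)*(y1:ℤ)*(y1:ℤ) + (13200)*(y1:ℤ)*(y1:ℤ)*(y1:ℤ) + (4200)*(y1:ℤ)*(y1:ℤ)*(y1:ℤ)*(y1:ℤ) + (-1200)*(δ:ℤ) + (-7200)*(δ:ℤ)*(y1:ℤ) + (-14400)*(δ:ℤ)*(y1:ℤ)*(y1:ℤ) + (-12000)*(δ:ℤ)*(y1:ℤ)*(y1:ℤ)*(y1:ℤ) + (-3000)*(δ:ℤ)*(δ:ℤ) + (1200)*(δ:ℤ)*(δ:ℤ)*(δ:ℤ) + (4800)*(δ:ℤ)*(δ:ℤ)*(δ:ℤ)*(y1:ℤ) + (3000)*(δ:ℤ)*(δ:ℤ)*(δ:ℤ)*(δ:ℤ) := (LII2 y1 δ δ hy1d).trans (by push_cast; ring)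
  calc (1728000:ℤ) * (∑ y1 ∈ Finset.Icc 1 δ, ∑ y2 ∈ Finset.Icc (y1+1) δ, ∑ y3 ∈ Finset.Icc (δ+1) (y2+δ), ((y1:ℤ)+(y2:ℤ))*(2*(δ:ℤ)-(y3:ℤ)))
      = (120:ℤ) * ∑ y1 ∈ Finset.Icc 1 δ, ((14400:ℤ) * (∑ y2 ∈ Finset.Icc (y1+1) δ, ∑ y3 ∈ Finset.Icc (δ+1) (y2+δ), ((y1:ℤ)+(y2:ℤ))*(2*(δ:ℤ)-(y3:ℤ)))) := by
        rw [Finset.mul_sum, Finset.mul_sum]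
        exact Finset.sum_congr rfl fun x _ => by ring
    _ = (120:ℤ) * ∑ y1 ∈ Finset.Icc 1 δ, ((1200)*(y1:ℤ) + (10200)*(y1:ℤ)*(y1:ℤ) + (13200)*(y1:ℤ)*(y1:ℤ)*(y1:ℤ) + (4200)*(y1:ℤ)*(y1:ℤ)*(y1:ℤ)*(y1:ℤ) + (-1200)*(δ:ℤ) + (-7200)*(δ:ℤ)*(y1:ℤ) + (-14400)*(δ:ℤ)*(y1:ℤ)*(y1:ℤ) + (-12000)*(δ:ℤ)*(y1:ℤ)*(y1:ℤ)*(y1:ℤ) + (-3000)*(δ:ℤ)*(δ:ℤ) + (1200)*(δ:ℤ)*(δ:ℤ)*(δ:ℤ) + (4800)*(δ:ℤ)*(δ:ℤ)*(δ:ℤ)*(y1:ℤ) + (3000)*(δ:ℤ)*(δ:ℤ)*(δ:ℤ)*(δ:ℤ)) := by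
        rw [Finset.sum_congr rfl h1]
    _ = (259200)*(δ:ℤ) + (216000)*(δ:ℤ)*(δ:ℤ) + (-648000)*(δ:ℤ)*(δ:ℤ)*(δ:ℤ) + (-216000)*(δ:ℤ)*(δ:ℤ)*(δ:ℤ)*(δ:ℤ) + (388800)*(δ:ℤ)*(δ:ℤ)*(δ:ℤ)*(δ:ℤ)*(δ:ℤ) := (LII3 δ δ).trans (by push_cast; ring)


lemma pieceIII_value (δ : ℕ) :
    (1728000:ℤ) * (∑ y1 ∈ Finset.Icc 1 δ, ∑ y2 ∈ Finset.Icc (δ+1) (y1+δ), ∑ y3 ∈ Finset.Icc (y2+1) (2*δ), (y1:ℤ)*(2*(δ:ℤ)-(y3:ℤ)))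
      = (86400)*(δ:ℤ) + (216000)*(δ:ℤ)*(δ:ℤ) + (-216000)*(δ:ℤ)*(δ:ℤ)*(δ:ℤ) + (-216000)*(δ:ℤ)*(δ:ℤ)*(δ:ℤ)*(δ:ℤ) + (129600)*(δ:ℤ)*(δ:ℤ)*(δ:ℤ)*(δ:ℤ)*(δ:ℤ) := by
  have h1 : ∀ y1 ∈ Finset.Icc 1 δ,
      (14400:ℤ) * (∑ y2 ∈ Finset.Icc (δ+1) (y1+δ), ∑ y3 ∈ Finset.Icc (y2+1) (2*δ), (y1:ℤ)*(2*(δ:ℤ)-(y3:ℤ)))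
        = (4800)*(y1:ℤ)*(y1:ℤ) + (7200)*(y1:ℤ)*(y1:ℤ)*(y1:ℤ) + (2400)*(y1:ℤ)*(y1:ℤ)*(y1:ℤ)*(y1:ℤ) + (-14400)*(δ:ℤ)*(y1:ℤ)*(y1:ℤ) + (-7200)*(δ:ℤ)*(y1:ℤ)*(y1:ℤ)*(y1:ℤ) + (7200)*(δ:ℤ)*(δ:ℤ)*(y1:ℤ)*(y1:ℤ) := by
    intro y1 hy1
    have hy1d : y1 ≤ δ := (Finset.mem_Icc.mp hy1).2
    have hy11 : 1 ≤ y1 := (Finset.mem_Icc.mp hy1).1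
    have h2 : ∀ y2 ∈ Finset.Icc (δ+1) (y1+δ),
        (120:ℤ) * (∑ y3 ∈ Finset.Icc (y2+1) (2*δ), (y1:ℤ)*(2*(δ:ℤ)-(y3:ℤ))) = (60)*(y1:ℤ)*(y2:ℤ) + (60)*(y1:ℤ)*(y2:ℤ)*(y2:ℤ) + (-120)*(y1:ℤ)*(δ:ℤ) + (-240)*(y1:ℤ)*(δ:ℤ)*(y2:ℤ) + (240)*(y1:ℤ)*(δ:ℤ)*(δ:ℤ) := by
      intro y2 hy2
      have hm := Finset.mem_Icc.mp hy2
      refine (LIII1 y1 y2 δ (2*δ) (by omega)).trans ?_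
      push_cast
      ring
    calc (14400:ℤ) * (∑ y2 ∈ Finset.Icc (δ+1) (y1+δ), ∑ y3 ∈ Finset.Icc (y2+1) (2*δ), (y1:ℤ)*(2*(δ:ℤ)-(y3:ℤ)))
        = (120:ℤ) * ∑ y2 ∈ Finset.Icc (δ+1) (y1+δ), ((120:ℤ) * (∑ y3 ∈ Finset.Icc (y2+1) (2*δ), (y1:ℤ)*(2*(δ:ℤ)-(y3:ℤ)))) := by
          rw [Finset.mul_sum, Finset.mul_sum]
          exact Finset.sum_congr rfl fun x _ => by ring
      _ = (120:ℤ) * ∑ y2 ∈ Finset.Icc (δ+1) (y1+δ), ((60)*(y1:ℤ)*(y2:ℤ) + (60)*(y1:ℤ)*(y2:ℤ)*(y2:ℤ) + (-120)*(y1:ℤ)*(δ:ℤ) + (-240)*(y1:ℤ)*(δ:ℤ)*(y2:ℤ) + (240)*(y1:ℤ)*(δ:ℤ)*(δ:ℤ)) := by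
          rw [Finset.sum_congr rfl h2]
      _ = (4800)*(y1:ℤ)*(y1:ℤ) + (7200)*(y1:ℤ)*(y1:ℤ)*(y1:ℤ) + (2400)*(y1:ℤ)*(y1:ℤ)*(y1:ℤ)*(y1:ℤ) + (-14400)*(δ:ℤ)*(y1:ℤ)*(y1:ℤ) + (-7200)*(δ:ℤ)*(y1:ℤ)*(y1:ℤ)*(y1:ℤ) + (7200)*(δ:ℤ)*(δ:ℤ)*(y1:ℤ)*(y1:ℤ) := (LIII2 y1 δ (y1+δ) (by omega)).trans (by push_cast; ring)
  calc (1728000:ℤ) * (∑ y1 ∈ Finset.Icc 1 δ, ∑ y2 ∈ Finset.Icc (δ+1) (y1+δ), ∑ y3 ∈ Finset.Icc (y2+1) (2*δ), (y1:ℤ)*(2*(δ:ℤ)-(y3:ℤ)))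
      = (120:ℤ) * ∑ y1 ∈ Finset.Icc 1 δ, ((14400:ℤ) * (∑ y2 ∈ Finset.Icc (δ+1) (y1+δ), ∑ y3 ∈ Finset.Icc (y2+1) (2*δ), (y1:ℤ)*(2*(δ:ℤ)-(y3:ℤ)))) := by
        rw [Finset.mul_sum, Finset.mul_sum]
        exact Finset.sum_congr rfl fun x _ => by ring
    _ = (120:ℤ) * ∑ y1 ∈ Finset.Icc 1 δ, ((4800)*(y1:ℤ)*(y1:ℤ) + (7200)*(y1:ℤ)*(y1:ℤ)*(y1:ℤ) + (2400)*(y1:ℤ)*(y1:ℤ)*(y1:ℤ)*(y1:ℤ) + (-14400)*(δ:ℤ)*(y1:ℤ)*(y1:ℤ) + (-7200)*(δ:ℤ)*(y1:ℤ)*(y1:ℤ)*(y1:ℤ) + (7200)*(δ:ℤ)*(δ:ℤ)*(y1:ℤ)*(y1:ℤ)) := by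
        rw [Finset.sum_congr rfl h1]
    _ = (86400)*(δ:ℤ) + (216000)*(δ:ℤ)*(δ:ℤ) + (-216000)*(δ:ℤ)*(δ:ℤ)*(δ:ℤ) + (-216000)*(δ:ℤ)*(δ:ℤ)*(δ:ℤ)*(δ:ℤ) + (129600)*(δ:ℤ)*(δ:ℤ)*(δ:ℤ)*(δ:ℤ)*(δ:ℤ) := (LIII3 δ δ).trans (by push_cast; ring)


lemma pieceB_value (δ : ℕ) :
    (1728000:ℤ) * (∑ y1 ∈ Finset.Icc 1 δ, ∑ y2 ∈ Finset.Icc (δ+2) (y1+δ), ∑ y3 ∈ Finset.Icc 1 (y2-(δ+1)), ((y1:ℤ)+(y3:ℤ))*(y3:ℤ))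
      = (-86400)*(δ:ℤ) + (-216000)*(δ:ℤ)*(δ:ℤ) + (216000)*(δ:ℤ)*(δ:ℤ)*(δ:ℤ)*(δ:ℤ) + (86400)*(δ:ℤ)*(δ:ℤ)*(δ:ℤ)*(δ:ℤ)*(δ:ℤ) := by
  have h1 : ∀ y1 ∈ Finset.Icc 1 δ,
      (14400:ℤ) * (∑ y2 ∈ Finset.Icc (δ+2) (y1+δ), ∑ y3 ∈ Finset.Icc 1 (y2-(δ+1)), ((y1:ℤ)+(y3:ℤ))*(y3:ℤ))
        = (-3600)*(y1:ℤ)*(y1:ℤ) + (3600)*(y1:ℤ)*(y1:ℤ)*(y1:ℤ)*(y1:ℤ) := by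
    intro y1 hy1
    have hy1d : y1 ≤ δ := (Finset.mem_Icc.mp hy1).2
    have hy11 : 1 ≤ y1 := (Finset.mem_Icc.mp hy1).1
    have h2 : ∀ y2 ∈ Finset.Icc (δ+2) (y1+δ),
        (120:ℤ) * (∑ y3 ∈ Finset.Icc 1 (y2-(δ+1)), ((y1:ℤ)+(y3:ℤ))*(y3:ℤ)) = (20)*(y2:ℤ) + (-60)*(y2:ℤ)*(y2:ℤ) + (40)*(y2:ℤ)*(y2:ℤ)*(y2:ℤ) + (-20)*(δ:ℤ) + (120)*(δ:ℤ)*(y2:ℤ) + (-120)*(δ:ℤ)*(y2:ℤ)*(y2:ℤ) + (-60)*(δ:ℤ)*(δ:ℤ) + (120)*(δ:ℤ)*(δ:ℤ)*(y2:ℤ) + (-40)*(δ:ℤ)*(δ:ℤ)*(δ:ℤ) + (-60)*(y1:ℤ)*(y2:ℤ) + (60)*(y1:ℤ)*(y2:ℤ)*(y2:ℤ) + (60)*(y1:ℤ)*(δ:ℤ) + (-120)*(y1:ℤ)*(δ:ℤ)*(y2:ℤ) + (60)*(y1:ℤ)*(δ:ℤ)*(δ:ℤ) := by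
      intro y2 hy2
      have hm := Finset.mem_Icc.mp hy2
      refine (LB1 y1 (y2-(δ+1))).trans ?_
      have hc : ((y2-(δ+1) : ℕ) : ℤ) = (y2:ℤ)-(δ:ℤ)-1 := by omega
      rw [hc]
      push_cast
      ring
    calc (14400:ℤ) * (∑ y2 ∈ Finset.Icc (δ+2) (y1+δ), ∑ y3 ∈ Finset.Icc 1 (y2-(δ+1)), ((y1:ℤ)+(y3:ℤ))*(y3:ℤ))
        = (120:ℤ) * ∑ y2 ∈ Finset.Icc (δ+2) (y1+δ), ((120:ℤ) * (∑ y3 ∈ Finset.Icc 1 (y2-(δ+1)), ((y1:ℤ)+(y3:ℤ))*(y3:ℤ))) := by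
          rw [Finset.mul_sum, Finset.mul_sum]
          exact Finset.sum_congr rfl fun x _ => by ring
      _ = (120:ℤ) * ∑ y2 ∈ Finset.Icc (δ+2) (y1+δ), ((20)*(y2:ℤ) + (-60)*(y2:ℤ)*(y2:ℤ) + (40)*(y2:ℤ)*(y2:ℤ)*(y2:ℤ) + (-20)*(δ:ℤ) + (120)*(δ:ℤ)*(y2:ℤ) + (-120)*(δ:ℤ)*(y2:ℤ)*(y2:ℤ) + (-60)*(δ:ℤ)*(δ:ℤ) + (120)*(δ:ℤ)*(δ:ℤ)*(y2:ℤ) + (-40)*(δ:ℤ)*(δ:ℤ)*(δ:ℤ) + (-60)*(y1:ℤ)*(y2:ℤ) + (60)*(y1:ℤ)*(y2:ℤ)*(y2:ℤ) + (60)*(y1:ℤ)*(δ:ℤ) + (-120)*(y1:ℤ)*(δ:ℤ)*(y2:ℤ) + (60)*(y1:ℤ)*(δ:ℤ)*(δ:ℤ)) := by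
          rw [Finset.sum_congr rfl h2]
      _ = (-3600)*(y1:ℤ)*(y1:ℤ) + (3600)*(y1:ℤ)*(y1:ℤ)*(y1:ℤ)*(y1:ℤ) := (LB2 y1 δ (y1+δ) (by omega)).trans (by push_cast; ring)
  calc (1728000:ℤ) * (∑ y1 ∈ Finset.Icc 1 δ, ∑ y2 ∈ Finset.Icc (δ+2) (y1+δ), ∑ y3 ∈ Finset.Icc 1 (y2-(δ+1)), ((y1:ℤ)+(y3:ℤ))*(y3:ℤ))
      = (120:ℤ) * ∑ y1 ∈ Finset.Icc 1 δ, ((14400:ℤ) * (∑ y2 ∈ Finset.Icc (δ+2) (y1+δ), ∑ y3 ∈ Finset.Icc 1 (y2-(δ+1)), ((y1:ℤ)+(y3:ℤ))*(y3:ℤ))) := by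
        rw [Finset.mul_sum, Finset.mul_sum]
        exact Finset.sum_congr rfl fun x _ => by ring
    _ = (120:ℤ) * ∑ y1 ∈ Finset.Icc 1 δ, ((-3600)*(y1:ℤ)*(y1:ℤ) + (3600)*(y1:ℤ)*(y1:ℤ)*(y1:ℤ)*(y1:ℤ)) := by
        rw [Finset.sum_congr rfl h1]
    _ = (-86400)*(δ:ℤ) + (-216000)*(δ:ℤ)*(δ:ℤ) + (216000)*(δ:ℤ)*(δ:ℤ)*(δ:ℤ)*(δ:ℤ) + (86400)*(δ:ℤ)*(δ:ℤ)*(δ:ℤ)*(δ:ℤ)*(δ:ℤ) := (LB3 δ δ).trans (by push_cast; ring)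


set_option maxHeartbeats 1000000 in
/-- Pairs (3-cycle through 0, 5-cycle through 0) such that every vertex of the 3-cycle
lying in the out-set `N⁺(0)` (in fact there is exactly one such vertex) also lies
on the 5-cycle. -/
theorem pairs_three_five_cycles_sharing_outneighbor_of_RLT
    (n : ℕ) (hodd : Odd n) (hn : 1 ≤ n) (δ : ℕ) (hδ : δ = (n - 1) / 2) :
    40 * (Nat.card {p : (Fin 3 → ZMod n) × (Fin 5 → ZMod n) //
        IsBasedCycleAtZero n 3 p.1 ∧ IsBasedCycleAtZero n 5 p.2 ∧
        ∀ x : ZMod n, x ∈ Set.range p.1 → rltAdj n 0 x → x ∈ Set.range p.2} : ℤ)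
      = ((δ : ℤ) - 1) * (δ : ℤ) * ((δ : ℤ) + 1) *
          (22 * (δ : ℤ) ^ 2 - 15 * (δ : ℤ) - 18) := by
  have hn2 : n = 2*δ+1 := by
    obtain ⟨m, hm⟩ := hodd
    omega
  subst hn2
  rw [card_eq_E6 δ]
  apply mul_left_cancel₀ (show (43200:ℤ) ≠ 0 by norm_num)
  rw [card_E6_eq δ]
  linear_combination pieceI_value δ + pieceII_value δ + pieceIII_value δ + pieceB_value δ
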